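/- For every n-uniform hypergraph F with fewer than 2^(n-1) hyperedges, Breaker (the second player) has a winning strategy in the Maker–Breaker positional game on F, where Maker moves first, players alternately claim previously unclaimed vertices, and Maker wins iff he claims all vertices of some hyperedge. -/

import Mathlib

open Finset

def MakerWinsAux {V : Type} [DecidableEq V] (E : Finset (Finset V)) :
    ℕ → Finset V → Finset V → Prop
  | 0, M, _ => ∃ e ∈ E, e ⊆ M
  | k+1, M, U =>
      (∃ e ∈ E, e ⊆ M) ∨
      ∃ v ∈ U, (∃ e ∈ E, e ⊆ insert v M) ∨
        ((U.erase v).Nonempty ∧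
          ∀ w ∈ U.erase v, MakerWinsAux E k (insert v M) ((U.erase v).erase w))

/-- Maker (moving first) has a winning strategy in the Maker-Breaker game on the
hypergraph with edge set `E`, played on the board `B`. -/
def MakerWins {V : Type} [DecidableEq V] (E : Finset (Finset V)) (B : Finset V) : Prop :=
  MakerWinsAux E B.card ∅ B

/-- Edges still "live": contained in Maker's set plus the unclaimed set. -/
def liveE {V : Type} [DecidableEq V] (E : Finset (Finset V)) (M U : Finset V) :
    Finset (Finset V) := E.filter (fun e => e ⊆ M ∪ U)

/-- The Erdős–Selfridge potential. -/
def pot {V : Type} [DecidableEq V] (E : Finset (Finset V)) (M U : Finset V) : ℕ :=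
  ∑ e ∈ liveE E M U, 2 ^ (e ∩ M).card

/-- The danger of a vertex. -/
def dang {V : Type} [DecidableEq V] (E : Finset (Finset V)) (M U : Finset V) (v : V) : ℕ :=
  ∑ e ∈ (liveE E M U).filter (fun e => v ∈ e), 2 ^ (e ∩ M).card

lemma pot_le {V : Type} [DecidableEq V] {E : Finset (Finset V)} {M U : Finset V}
    {e : Finset V} (heE : e ∈ E) (heM : e ⊆ M) : 2 ^ e.card ≤ pot E M U := by
  have h1 : e ∈ liveE E M U := by
    simp only [liveE, mem_filter]
    exact ⟨heE, heM.trans subset_union_left⟩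
  have h2 : e ∩ M = e := inter_eq_left.mpr heM
  calc 2 ^ e.card = 2 ^ (e ∩ M).card := by rw [h2]
    _ ≤ pot E M U :=
      Finset.single_le_sum (f := fun e => 2 ^ (e ∩ M).card) (fun _ _ => Nat.zero_le _) h1

lemma pot_insert {V : Type} [DecidableEq V] (E : Finset (Finset V)) {M U : Finset V}
    {v : V} (hvU : v ∈ U) (hvM : v ∉ M) :
    pot E (insert v M) (U.erase v) = pot E M U + dang E M U v := by
  have hU : insert v M ∪ U.erase v = M ∪ U := by
    rw [insert_union, ← union_insert, insert_erase hvU]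
  have hlive : liveE E (insert v M) (U.erase v) = liveE E M U := by
    simp only [liveE, hU]
  rw [pot, hlive]
  rw [← Finset.sum_filter_add_sum_filter_not (liveE E M U) (fun e => v ∈ e)]
  have h1 : ∀ e ∈ (liveE E M U).filter (fun e => v ∈ e),
      2 ^ (e ∩ insert v M).card = 2 ^ (e ∩ M).card + 2 ^ (e ∩ M).card := by
    intro e he
    have hve : v ∈ e := (mem_filter.mp he).2
    have : e ∩ insert v M = insert v (e ∩ M) := by
      ext x
      simp only [mem_inter, mem_insert]
      constructor
      · rintro ⟨hx, h | h⟩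
        · exact Or.inl h
        · exact Or.inr ⟨hx, h⟩
      · rintro (h | ⟨hx, h⟩)
        · exact ⟨h ▸ hve, Or.inl h⟩
        · exact ⟨hx, Or.inr h⟩
    rw [this, card_insert_of_notMem (by simp [hvM]), pow_succ]
    ring
  have h2 : ∀ e ∈ (liveE E M U).filter (fun e => ¬ v ∈ e),
      2 ^ (e ∩ insert v M).card = 2 ^ (e ∩ M).card := by
    intro e he
    have hve : v ∉ e := (mem_filter.mp he).2
    have : e ∩ insert v M = e ∩ M := by
      ext x; simp only [mem_inter, mem_insert]
      constructor
      · rintro ⟨hx, h | h⟩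
        · exact absurd (h ▸ hx) hve
        · exact ⟨hx, h⟩
      · tauto
    rw [this]
  rw [Finset.sum_congr rfl h1, Finset.sum_congr rfl h2, Finset.sum_add_distrib]
  rw [pot, ← Finset.sum_filter_add_sum_filter_not (liveE E M U) (fun e => v ∈ e), dang]
  ring

lemma pot_erase {V : Type} [DecidableEq V] (E : Finset (Finset V)) {M U : Finset V}
    {w : V} (hwM : w ∉ M) :
    pot E M (U.erase w) + dang E M U w = pot E M U := by
  have hlive : liveE E M (U.erase w) = (liveE E M U).filter (fun e => ¬ w ∈ e) := by
    ext e
    simp only [liveE, mem_filter]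
    constructor
    · rintro ⟨heE, hsub⟩
      refine ⟨⟨heE, hsub.trans (union_subset_union_right (erase_subset _ _))⟩, fun hwe => ?_⟩
      rcases mem_union.mp (hsub hwe) with h | h
      · exact hwM h
      · exact (notMem_erase w U) h
    · rintro ⟨⟨heE, hsub⟩, hwe⟩
      refine ⟨heE, fun x hx => ?_⟩
      rcases mem_union.mp (hsub hx) with h | h
      · exact mem_union_left _ h
      · exact mem_union_right _ (mem_erase.mpr ⟨fun hxw => hwe (hxw ▸ hx), h⟩)
  rw [pot, hlive, dang, add_comm,
    Finset.sum_filter_add_sum_filter_not (liveE E M U) (fun e => w ∈ e)]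
  rfl

lemma dang_mono {V : Type} [DecidableEq V] (E : Finset (Finset V)) {M U U' : Finset V}
    (h : U' ⊆ U) (u : V) : dang E M U' u ≤ dang E M U u := by
  have hsub : liveE E M U' ⊆ liveE E M U := by
    intro e he
    simp only [liveE, mem_filter] at he ⊢
    exact ⟨he.1, he.2.trans (union_subset_union_right h)⟩
  exact Finset.sum_le_sum_of_subset (Finset.filter_subset_filter _ hsub)

lemma dang_le_pot {V : Type} [DecidableEq V] (E : Finset (Finset V)) (M U : Finset V)
    (v : V) : dang E M U v ≤ pot E M U :=
  Finset.sum_le_sum_of_subset (filter_subset _ _)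

lemma breaker {V : Type} [DecidableEq V] (n : ℕ) (E : Finset (Finset V))
    (hunif : ∀ e ∈ E, e.card = n) :
    ∀ k (M U : Finset V), Disjoint M U → pot E M U < 2 ^ n →
      (∀ v ∈ U, pot E M U + dang E M U v < 2 ^ n) → ¬ MakerWinsAux E k M U := by
  intro k
  induction k with
  | zero =>
    rintro M U hdis h1 h2 ⟨e, heE, heM⟩
    exact absurd h1 (not_lt.mpr (hunif e heE ▸ pot_le heE heM))
  | succ k ih =>
    rintro M U hdis h1 h2 (⟨e, heE, heM⟩ | ⟨v, hvU, H⟩)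
    · exact absurd h1 (not_lt.mpr (hunif e heE ▸ pot_le heE heM))
    · have hvM : v ∉ M := fun h => (disjoint_left.mp hdis h) hvU
      rcases H with ⟨e, heE, heM'⟩ | ⟨hne, H⟩
      · -- Maker completes an edge with v: the potential was already too big.
        by_cases hve : v ∈ e
        · have helive : e ∈ (liveE E M U).filter (fun e => v ∈ e) := by
            simp only [liveE, mem_filter]
            refine ⟨⟨heE, fun x hx => ?_⟩, hve⟩
            rcases mem_insert.mp (heM' hx) with h | h
            · exact h ▸ mem_union_right _ hvU
            · exact mem_union_left _ h
          have hd : 2 ^ (e ∩ M).card ≤ dang E M U v :=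
            Finset.single_le_sum (f := fun e => 2 ^ (e ∩ M).card)
              (fun _ _ => Nat.zero_le _) helive
          have hp : 2 ^ (e ∩ M).card ≤ pot E M U :=
            Finset.single_le_sum (f := fun e => 2 ^ (e ∩ M).card)
              (fun _ _ => Nat.zero_le _) (mem_of_mem_filter e helive)
          have hcard : (e ∩ M).card + 1 = n := by
            have h1 : e ∩ insert v M = insert v (e ∩ M) := by
              ext x
              simp only [mem_inter, mem_insert]
              constructor
              · rintro ⟨hx, h | h⟩
                · exact Or.inl h
                · exact Or.inr ⟨hx, h⟩
              · rintro (h | ⟨hx, h⟩)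
                · exact ⟨h ▸ hve, Or.inl h⟩
                · exact ⟨hx, Or.inr h⟩
            have h2 : e ∩ insert v M = e := inter_eq_left.mpr heM'
            have := card_insert_of_notMem (s := e ∩ M) (a := v) (by simp [hvM])
            rw [← h1, h2, hunif e heE] at this
            omega
          have : 2 ^ n ≤ pot E M U + dang E M U v := by
            calc 2 ^ n = 2 ^ (e ∩ M).card + 2 ^ (e ∩ M).card := by
                  rw [← hcard, pow_succ]; ring
              _ ≤ pot E M U + dang E M U v := Nat.add_le_add hp hd
          exact absurd (h2 v hvU) (not_lt.mpr this)
        · have heM : e ⊆ M := fun x hx => by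
            rcases mem_insert.mp (heM' hx) with h | h
            · exact absurd (h ▸ hx) hve
            · exact h
          exact absurd h1 (not_lt.mpr (hunif e heE ▸ pot_le heE heM))
      · -- Breaker answers with the most dangerous vertex.
        obtain ⟨w, hwU', hwmax⟩ :=
          Finset.exists_max_image (U.erase v) (dang E (insert v M) (U.erase v)) hne
        have hwv : w ≠ v := (mem_erase.mp hwU').1
        have hwU : w ∈ U := (mem_erase.mp hwU').2
        have hwM' : w ∉ insert v M := by
          simp only [mem_insert]
          push_neg
          exact ⟨hwv, fun h => (disjoint_left.mp hdis h) hwU⟩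
        have hins : pot E (insert v M) (U.erase v) = pot E M U + dang E M U v :=
          pot_insert E hvU hvM
        have hera : pot E (insert v M) ((U.erase v).erase w)
            + dang E (insert v M) (U.erase v) w = pot E (insert v M) (U.erase v) :=
          pot_erase E hwM'
        have hbound : pot E (insert v M) (U.erase v) < 2 ^ n := hins ▸ h2 v hvU
        refine ih (insert v M) ((U.erase v).erase w) ?_ ?_ ?_ (H w hwU')
        · -- disjointness
          rw [disjoint_left]
          intro x hx hx'
          have hx'' := mem_of_mem_erase (mem_of_mem_erase hx')
          rcases mem_insert.mp hx with h | h
          · exact (mem_erase.mp (mem_of_mem_erase hx')).1 h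
          · exact (disjoint_left.mp hdis h) hx''
        · omega
        · intro u huU
          have h3 : dang E (insert v M) ((U.erase v).erase w) u
              ≤ dang E (insert v M) (U.erase v) u :=
            dang_mono E (erase_subset _ _) u
          have h4 := hwmax u (mem_of_mem_erase huU) -- check membership structure
          omega

theorem erdos_selfridge {V : Type} [Fintype V] [DecidableEq V] (n : ℕ)
    (E : Finset (Finset V)) (hunif : ∀ e ∈ E, e.card = n)
    (hcard : E.card < 2 ^ (n - 1)) :
    ¬ MakerWins E (Finset.univ : Finset V) := by
  have hpot : pot E ∅ Finset.univ = E.card := by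
    have : liveE E ∅ Finset.univ = E := by
      simp [liveE, Finset.filter_true_of_mem, fun e (_ : e ∈ E) => e.subset_univ]
    simp [pot, this]
  have hlt : E.card < 2 ^ n := lt_of_lt_of_le hcard (Nat.pow_le_pow_right (by norm_num) (Nat.sub_le _ _))
  apply breaker n E hunif
  · simp
  · omega
  · intro v _
    have := dang_le_pot E ∅ Finset.univ v
    rcases Nat.eq_zero_or_pos n with hn | hn
    · subst hn
      interval_cases h : E.card
      · simp at hpot ⊢; omega
    · have : E.card + E.card < 2 ^ (n - 1) + 2 ^ (n - 1) := by omega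
      have h2 : 2 ^ (n - 1) + 2 ^ (n - 1) = 2 ^ n := by
        rw [← two_mul, ← pow_succ']
        congr 1
        omega
      omega
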